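/- Let T be an infinite rooted tree without terminal vertices and let ψ : T → ℂ, φ : T → T be such that ψC_φ : 𝓛 → L^∞ is bounded. Then the essential norm satisfies ‖ψC_φ‖_{e, 𝓛→L^∞} = limsup_{|φ(v)|→∞} |ψ(v)|·|φ(v)|, where the limsup is the infimum over N of sup{|ψ(v)||φ(v)| : |φ(v)| > N} (interpreted as 0 if φ has finite range). -/

import Mathlib

open scoped Classical

/-- An infinite rooted tree without terminal vertices, encoded by its root `o`,
the parent map, and the distance-to-root function `len`. Local finiteness and
absence of terminal vertices are part of the structure. -/
structure InfRootedTree (T : Type*) where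
  o : T
  parent : T → T
  len : T → ℕ
  len_o : len o = 0
  parent_o : parent o = o
  len_parent : ∀ v, v ≠ o → len (parent v) + 1 = len v
  reach : ∀ v, parent^[len v] v = o
  no_terminal : ∀ v, ∃ w, w ≠ o ∧ parent w = v
  locally_finite : ∀ v, {w | parent w = v}.Finite

/-- The discrete derivative `Df(v) = f(v) - f(v⁻)`, `Df(o) = 0`. -/
noncomputable def Dop {T : Type*} (t : InfRootedTree T) (f : T → ℂ) (v : T) : ℂ :=
  if v = t.o then 0 else f v - f (t.parent v)

/-- Membership in the Lipschitz space `𝓛`. -/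
def InLip {T : Type*} (t : InfRootedTree T) (f : T → ℂ) : Prop :=
  BddAbove (Set.range fun v => ‖Dop t f v‖)

/-- The Lipschitz norm `‖f‖_𝓛 = |f(o)| + sup_v |Df(v)|`. -/
noncomputable def lipNorm {T : Type*} (t : InfRootedTree T) (f : T → ℂ) : ℝ :=
  ‖f t.o‖ + ⨆ v, ‖Dop t f v‖

open scoped BoundedContinuousFunction

lemma Dop_add {T : Type*} (t : InfRootedTree T) (f g : T → ℂ) (v : T) :
    Dop t (f + g) v = Dop t f v + Dop t g v := by
  unfold Dop; split <;> simp <;> ring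

lemma Dop_smul {T : Type*} (t : InfRootedTree T) (c : ℂ) (f : T → ℂ) (v : T) :
    Dop t (c • f) v = c • Dop t f v := by
  unfold Dop; split <;> simp <;> ring

/-- The Lipschitz space `𝓛` as a subspace of the space of all functions on `T`. -/
noncomputable def LipSub {T : Type*} (t : InfRootedTree T) : Submodule ℂ (T → ℂ) where
  carrier := {f | BddAbove (Set.range fun v => ‖Dop t f v‖)}
  zero_mem' := by
    refine ⟨0, ?_⟩
    rintro x ⟨v, rfl⟩
    simp [Dop]
  add_mem' := by
    rintro f g ⟨Cf, hCf⟩ ⟨Cg, hCg⟩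
    refine ⟨Cf + Cg, ?_⟩
    rintro x ⟨v, rfl⟩
    calc ‖Dop t (f + g) v‖ = ‖Dop t f v + Dop t g v‖ := by rw [Dop_add]
      _ ≤ ‖Dop t f v‖ + ‖Dop t g v‖ := norm_add_le _ _
      _ ≤ Cf + Cg := add_le_add (hCf ⟨v, rfl⟩) (hCg ⟨v, rfl⟩)
  smul_mem' := by
    rintro c f ⟨C, hC⟩
    refine ⟨‖c‖ * C, ?_⟩
    rintro x ⟨v, rfl⟩
    calc ‖Dop t (c • f) v‖ = ‖c‖ * ‖Dop t f v‖ := by rw [Dop_smul]; simp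
      _ ≤ ‖c‖ * C := by
          have := hC ⟨v, rfl⟩
          exact mul_le_mul_of_nonneg_left this (norm_nonneg c)


namespace Stmt13Aux

variable {T : Type*} (t : InfRootedTree T)

lemma eq_o_of_len_eq_zero {v : T} (h : t.len v = 0) : v = t.o := by
  have := t.reach v
  rwa [h, Function.iterate_zero, id_eq] at this

lemma len_parent_le (v : T) : t.len (t.parent v) ≤ t.len v := by
  by_cases h : v = t.o
  · subst h; rw [t.parent_o]
  · have := t.len_parent v h; omega

lemma len_iter_le (k : ℕ) (v : T) : t.len (t.parent^[k] v) ≤ t.len v := by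
  induction k with
  | zero => simp
  | succ n ih =>
    rw [Function.iterate_succ_apply']
    exact le_trans (len_parent_le t _) ih

lemma iter_o (k : ℕ) : t.parent^[k] t.o = t.o := by
  induction k with
  | zero => rfl
  | succ n ih => rw [Function.iterate_succ_apply', ih, t.parent_o]

lemma iter_eq_o_of_le {k : ℕ} {v : T} (h : t.len v ≤ k) : t.parent^[k] v = t.o := by
  obtain ⟨m, rfl⟩ := Nat.exists_eq_add_of_le h
  rw [add_comm, Function.iterate_add_apply, t.reach, iter_o]

/-- The ancestor set of `w`, as a Finset. -/
noncomputable def anc (w : T) : Finset T :=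
  (Finset.range (t.len w + 1)).image (fun k => t.parent^[k] w)

lemma mem_anc_iff {u w : T} : u ∈ anc t w ↔ ∃ k, t.parent^[k] w = u := by
  constructor
  · rintro h
    simp only [anc, Finset.mem_image, Finset.mem_range] at h
    obtain ⟨k, _, hk⟩ := h
    exact ⟨k, hk⟩
  · rintro ⟨k, rfl⟩
    simp only [anc, Finset.mem_image, Finset.mem_range]
    rcases le_or_gt k (t.len w) with h | h
    · exact ⟨k, by omega, rfl⟩
    · exact ⟨t.len w, by omega, by rw [t.reach, iter_eq_o_of_le t h.le]⟩

lemma mem_anc_self (w : T) : w ∈ anc t w := mem_anc_iff t |>.mpr ⟨0, rfl⟩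

lemma o_mem_anc (w : T) : t.o ∈ anc t w := mem_anc_iff t |>.mpr ⟨t.len w, t.reach w⟩

lemma len_le_of_mem_anc {u w : T} (h : u ∈ anc t w) : t.len u ≤ t.len w := by
  obtain ⟨k, rfl⟩ := mem_anc_iff t |>.mp h
  exact len_iter_le t k w

lemma anc_o : anc t t.o = {t.o} := by
  ext u
  simp only [mem_anc_iff, Finset.mem_singleton]
  constructor
  · rintro ⟨k, rfl⟩; rw [iter_o]
  · rintro rfl; exact ⟨0, rfl⟩

lemma anc_eq_insert {v : T} (hv : v ≠ t.o) :
    anc t v = insert v (anc t (t.parent v)) := by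
  ext u
  simp only [mem_anc_iff, Finset.mem_insert]
  constructor
  · rintro ⟨k, rfl⟩
    cases k with
    | zero => exact Or.inl rfl
    | succ n => exact Or.inr ⟨n, by rw [← Function.iterate_succ_apply]⟩
  · rintro (rfl | ⟨k, rfl⟩)
    · exact ⟨0, rfl⟩
    · exact ⟨k + 1, by rw [Function.iterate_succ_apply]⟩

lemma not_mem_anc_parent {v : T} (hv : v ≠ t.o) : v ∉ anc t (t.parent v) := by
  intro h
  have h1 := len_le_of_mem_anc t h
  have h2 := t.len_parent v hv
  omega

lemma card_anc (w : T) : (anc t w).card = t.len w + 1 := by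
  generalize hn : t.len w = n
  induction n generalizing w with
  | zero =>
    have := eq_o_of_len_eq_zero t hn
    subst this
    rw [anc_o]; simp
  | succ n ih =>
    have hv : w ≠ t.o := by intro h; subst h; rw [t.len_o] at hn; omega
    have hp := t.len_parent w hv
    rw [anc_eq_insert t hv, Finset.card_insert_of_notMem (not_mem_anc_parent t hv),
      ih (t.parent w) (by omega)]

end Stmt13Aux

namespace Stmt13Aux

variable {T : Type*} (t : InfRootedTree T)

/-- Test function: `f_w(v) = |v ∧ w|` via ancestor-set intersection cardinality. -/
noncomputable def testFun (w : T) : T → ℂ :=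
  fun v => ((anc t v ∩ anc t w).card : ℂ) - 1

lemma card_inter_pos (v w : T) : 1 ≤ (anc t v ∩ anc t w).card := by
  have : t.o ∈ anc t v ∩ anc t w := Finset.mem_inter.mpr ⟨o_mem_anc t v, o_mem_anc t w⟩
  exact Finset.card_pos.mpr ⟨t.o, this⟩ 

lemma card_inter_le_left (v w : T) : (anc t v ∩ anc t w).card ≤ t.len v + 1 := by
  calc (anc t v ∩ anc t w).card ≤ (anc t v).card := Finset.card_le_card (Finset.inter_subset_left)
    _ = t.len v + 1 := card_anc t v

lemma card_inter_le_right (v w : T) : (anc t v ∩ anc t w).card ≤ t.len w + 1 := by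
  calc (anc t v ∩ anc t w).card ≤ (anc t w).card := Finset.card_le_card (Finset.inter_subset_right)
    _ = t.len w + 1 := card_anc t w

lemma testFun_self (w : T) : testFun t w w = (t.len w : ℂ) := by
  unfold testFun
  rw [Finset.inter_self, card_anc]
  push_cast; ring

lemma Dop_testFun (w : T) (v : T) :
    Dop t (testFun t w) v = if v ≠ t.o ∧ v ∈ anc t w then 1 else 0 := by
  unfold Dop
  by_cases hv : v = t.o
  · simp [hv]
  · simp only [if_neg hv, hv, ne_eq, not_false_eq_true, true_and]
    have hins : anc t v ∩ anc t w =
        if v ∈ anc t w then insert v (anc t (t.parent v) ∩ anc t w)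
        else anc t (t.parent v) ∩ anc t w := by
      rw [anc_eq_insert t hv]
      by_cases h : v ∈ anc t w
      · rw [if_pos h, Finset.insert_inter_of_mem h]
      · rw [if_neg h, Finset.insert_inter_of_notMem h]
    by_cases h : v ∈ anc t w
    · rw [if_pos h]
      unfold testFun
      rw [hins, if_pos h, Finset.card_insert_of_notMem]
      · push_cast; ring
      · intro hmem
        exact not_mem_anc_parent t hv (Finset.mem_inter.mp hmem).1
    · rw [if_neg h]
      unfold testFun
      rw [hins, if_neg h]
      simp

lemma norm_Dop_testFun_le (w : T) (v : T) : ‖Dop t (testFun t w) v‖ ≤ 1 := by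
  rw [Dop_testFun]
  split <;> simp

lemma testFun_mem : testFun t w ∈ LipSub t :=
  ⟨1, by rintro x ⟨v, rfl⟩; exact norm_Dop_testFun_le t w v⟩

lemma testFun_o (w : T) : testFun t w t.o = 0 := by
  unfold testFun
  rw [anc_o]
  have : ({t.o} : Finset T) ∩ anc t w = {t.o} := by
    rw [Finset.singleton_inter_of_mem (o_mem_anc t w)]
  rw [this]; simp

/-- The element of `LipSub` given by `testFun`. -/
noncomputable def F (w : T) : LipSub t := ⟨testFun t w, testFun_mem t⟩

lemma Dop_sub (f g : T → ℂ) (v : T) :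
    Dop t (f - g) v = Dop t f v - Dop t g v := by
  unfold Dop; split <;> [simp; ring_nf]
  simp [Pi.sub_apply]; ring

/-- `lipNorm` bound from pointwise data. -/
lemma lipNorm_le (f : T → ℂ) {a b : ℝ} (ho : ‖f t.o‖ ≤ a) (hd : ∀ v, ‖Dop t f v‖ ≤ b)
    (hb : 0 ≤ b) : lipNorm t f ≤ a + b := by
  unfold lipNorm
  exact add_le_add ho (Real.iSup_le hd hb)

lemma lipNorm_F_le (w : T) : lipNorm t ((F t w : T → ℂ)) ≤ 1 := by
  have := lipNorm_le t (testFun t w) (a := 0) (b := 1)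
    (by rw [testFun_o]; simp) (norm_Dop_testFun_le t w) zero_le_one
  have h2 : lipNorm t (testFun t w) ≤ 1 := by simpa using this
  exact h2

lemma lipNorm_F_sub_le (w w' : T) : lipNorm t ((F t w - F t w' : LipSub t) : T → ℂ) ≤ 1 := by
  have hcoe : ((F t w - F t w' : LipSub t) : T → ℂ) = testFun t w - testFun t w' := rfl
  rw [hcoe]
  have := lipNorm_le t (testFun t w - testFun t w') (a := 0) (b := 1) ?_ ?_ zero_le_one
  · simpa using this
  · simp [Pi.sub_apply, testFun_o]
  · intro v
    rw [Dop_sub, Dop_testFun, Dop_testFun]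
    split <;> split <;> simp

/-- Growth estimate: `‖f v‖ ≤ ‖f o‖ + len v * S` if all `‖Dop f‖ ≤ S`. -/
lemma norm_apply_le (f : T → ℂ) {S : ℝ} (hS : ∀ u, ‖Dop t f u‖ ≤ S) (v : T) :
    ‖f v‖ ≤ ‖f t.o‖ + t.len v * S := by
  have key : f v - f t.o = ∑ k ∈ Finset.range (t.len v), Dop t f (t.parent^[k] v) := by
    have := Finset.sum_range_sub' (fun k => f (t.parent^[k] v)) (t.len v)
    rw [t.reach] at this
    simp only [Function.iterate_zero_apply] at this
    rw [← this]
    apply Finset.sum_congr rfl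
    intro k hk
    rw [Finset.mem_range] at hk
    have hne : t.parent^[k] v ≠ t.o := by
      intro h
      have : t.len v ≤ k := by
        by_contra hlt
        push_neg at hlt
        have h2 : t.parent^[t.len v] v = t.o := t.reach v
        -- len of parent^[k] v = 0 means... use len_iter
        have h3 : t.len (t.parent^[k] v) = 0 := by rw [h, t.len_o]
        -- need len (parent^[k] v) ≥ len v - k > 0
        have h4 : t.len v ≤ t.len (t.parent^[k] v) + k := by
          clear h3 h
          induction k with
          | zero => simp
          | succ n ih =>
            have ih' := ih (by omega)
            rw [Function.iterate_succ_apply']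
            by_cases ho : t.parent^[n] v = t.o
            · rw [ho, t.parent_o]
              rw [ho, t.len_o] at ih'
              omega
            · have := t.len_parent _ ho
              omega
        omega
      omega
    unfold Dop
    rw [if_neg hne, Function.iterate_succ_apply']
  have h1 : ‖f v - f t.o‖ ≤ t.len v * S := by
    rw [key]
    calc ‖∑ k ∈ Finset.range (t.len v), Dop t f (t.parent^[k] v)‖
        ≤ ∑ k ∈ Finset.range (t.len v), ‖Dop t f (t.parent^[k] v)‖ := norm_sum_le _ _
      _ ≤ ∑ _k ∈ Finset.range (t.len v), S := Finset.sum_le_sum (fun k _ => hS _)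
      _ = t.len v * S := by rw [Finset.sum_const, Finset.card_range, nsmul_eq_mul]
  calc ‖f v‖ = ‖f t.o + (f v - f t.o)‖ := by ring_nf
    _ ≤ ‖f t.o‖ + ‖f v - f t.o‖ := norm_add_le _ _
    _ ≤ ‖f t.o‖ + t.len v * S := by linarith

end Stmt13Aux

namespace Stmt13Aux

variable {T : Type*} (t : InfRootedTree T)

lemma levels_finite (n : ℕ) : {w : T | t.len w ≤ n}.Finite := by
  induction n with
  | zero =>
    apply Set.Finite.subset (Set.finite_singleton t.o)
    intro w hw
    simp only [Set.mem_setOf_eq, Nat.le_zero] at hw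
    exact eq_o_of_len_eq_zero t hw
  | succ n ih =>
    have hsub : {w : T | t.len w ≤ n + 1} ⊆
        insert t.o (⋃ v ∈ {w : T | t.len w ≤ n}, {w | t.parent w = v}) := by
      intro w hw
      by_cases h : w = t.o
      · exact Set.mem_insert_iff.mpr (Or.inl h)
      · apply Set.mem_insert_iff.mpr
        right
        simp only [Set.mem_iUnion, Set.mem_setOf_eq]
        refine ⟨t.parent w, ?_, rfl⟩
        have := t.len_parent w h
        simp only [Set.mem_setOf_eq] at hw ⊢
        omega
    exact Set.Finite.subset (Set.Finite.insert t.o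
      (Set.Finite.biUnion ih (fun v _ => t.locally_finite v))) hsub

lemma nonempty_T (t : InfRootedTree T) : Nonempty T := ⟨t.o⟩

/-- The constant function 1 in `LipSub`. -/
noncomputable def oneF : LipSub t :=
  ⟨(fun _ => 1), ⟨0, by rintro x ⟨v, rfl⟩; simp [Dop]⟩⟩

lemma lipNorm_oneF : lipNorm t ((oneF t : T → ℂ)) = 1 := by
  have : Nonempty T := nonempty_T t
  unfold lipNorm
  have h1 : (fun v => ‖Dop t ((oneF t : T → ℂ)) v‖) = fun _ => (0:ℝ) := by
    funext v
    simp only [oneF, Dop]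
    split <;> simp
  rw [h1, ciSup_const]
  simp [oneF]

/-- The function `v ↦ len v` in `LipSub`. -/
noncomputable def lenF : LipSub t :=
  ⟨(fun v => (t.len v : ℂ)), ⟨1, by
    rintro x ⟨v, rfl⟩
    simp only [Dop]
    split
    · simp
    · rename_i h
      have := t.len_parent v h
      have hc : (t.len v : ℂ) - (t.len (t.parent v) : ℂ) = 1 := by
        have h2 : ((t.len (t.parent v)) : ℂ) + 1 = (t.len v : ℂ) := by exact_mod_cast this
        linear_combination -h2
      rw [hc]; simp⟩⟩

lemma Dop_lenF {v : T} (hv : v ≠ t.o) : Dop t ((lenF t : T → ℂ)) v = 1 := by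
  simp only [lenF, Dop, if_neg hv]
  have h := t.len_parent v hv
  have h2 : ((t.len (t.parent v)) : ℂ) + 1 = (t.len v : ℂ) := by exact_mod_cast h
  linear_combination -h2

lemma lipNorm_lenF : lipNorm t ((lenF t : T → ℂ)) = 1 := by
  unfold lipNorm
  have h0 : ‖((lenF t : T → ℂ)) t.o‖ = 0 := by
    simp only [lenF, t.len_o]; simp
  rw [h0, zero_add]
  apply le_antisymm
  · apply Real.iSup_le _ zero_le_one
    intro v
    by_cases hv : v = t.o
    · simp [Dop, hv]
    · rw [Dop_lenF t hv]; simp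
  · obtain ⟨w, hw, -⟩ := t.no_terminal t.o
    have hb : BddAbove (Set.range fun v => ‖Dop t ((lenF t : T → ℂ)) v‖) := (lenF t).2
    have := le_ciSup hb w
    rw [Dop_lenF t hw] at this
    simpa using this

end Stmt13Aux

namespace Stmt13Aux

variable {T : Type*} [TopologicalSpace T] [DiscreteTopology T]
  (t : InfRootedTree T) (ψ : T → ℂ) (φ : T → T)

/-- The supremum of derivative norms. -/
noncomputable def dsup (f : LipSub t) : ℝ := ⨆ v, ‖Dop t (f : T → ℂ) v‖

lemma Dop_le_dsup (f : LipSub t) (v : T) : ‖Dop t (f : T → ℂ) v‖ ≤ dsup t f :=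
  le_ciSup f.2 v

lemma dsup_nonneg (f : LipSub t) : 0 ≤ dsup t f :=
  le_trans (norm_nonneg _) (Dop_le_dsup t f t.o)

lemma lipNorm_eq (f : LipSub t) : lipNorm t (f : T → ℂ) = ‖(f : T → ℂ) t.o‖ + dsup t f := rfl

lemma norm_o_le (f : LipSub t) : ‖(f : T → ℂ) t.o‖ ≤ lipNorm t (f : T → ℂ) := by
  rw [lipNorm_eq]; linarith [dsup_nonneg t f]

lemma dsup_le (f : LipSub t) : dsup t f ≤ lipNorm t (f : T → ℂ) := by
  rw [lipNorm_eq]; linarith [norm_nonneg ((f : T → ℂ) t.o)]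

lemma norm_apply_le' (f : LipSub t) (v : T) :
    ‖(f : T → ℂ) v‖ ≤ ‖(f : T → ℂ) t.o‖ + t.len v * dsup t f :=
  norm_apply_le t _ (Dop_le_dsup t f) v

variable {Cψ : ℝ}

/-- The truncated operator. -/
noncomputable def KN (hψ : ∀ v, ‖ψ v‖ ≤ Cψ) (hC : 0 ≤ Cψ) (N : ℕ) :
    LipSub t →ₗ[ℂ] (T →ᵇ ℂ) where
  toFun f := BoundedContinuousFunction.ofNormedAddCommGroup
    (fun v => if t.len (φ v) ≤ N then ψ v * (f : T → ℂ) (φ v) else 0)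
    continuous_of_discreteTopology
    (Cψ * (‖(f : T → ℂ) t.o‖ + N * dsup t f))
    (by
      intro v
      split
      · rename_i h
        rw [norm_mul]
        have h1 : ‖(f : T → ℂ) (φ v)‖ ≤ ‖(f : T → ℂ) t.o‖ + N * dsup t f := by
          have h0 := norm_apply_le' t f (φ v)
          have h2 : (t.len (φ v) : ℝ) * dsup t f ≤ N * dsup t f :=
            mul_le_mul_of_nonneg_right (by exact_mod_cast h) (dsup_nonneg t f)
          linarith
        exact mul_le_mul (hψ v) h1 (norm_nonneg _)
          (le_trans (norm_nonneg _) (hψ v))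
      · rename_i h
        simp only [norm_zero]
        have : (0:ℝ) ≤ ‖(f : T → ℂ) t.o‖ + N * dsup t f := by
          have := dsup_nonneg t f
          positivity
        exact mul_nonneg hC this)
  map_add' f g := by
    ext v
    simp only [BoundedContinuousFunction.coe_ofNormedAddCommGroup,
      BoundedContinuousFunction.coe_add, Pi.add_apply]
    by_cases h : t.len (φ v) ≤ N
    · simp only [if_pos h, Submodule.coe_add, Pi.add_apply]; ring
    · simp only [if_neg h, add_zero]
  map_smul' c f := by
    ext v
    simp only [BoundedContinuousFunction.coe_ofNormedAddCommGroup, RingHom.id_apply,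
      BoundedContinuousFunction.coe_smul, Pi.smul_apply, smul_eq_mul]
    by_cases h : t.len (φ v) ≤ N
    · simp only [if_pos h, SetLike.val_smul, Pi.smul_apply, smul_eq_mul]; ring
    · simp only [if_neg h, mul_zero]

lemma KN_apply (hψ : ∀ v, ‖ψ v‖ ≤ Cψ) (hC : 0 ≤ Cψ) (N : ℕ) (f : LipSub t) (v : T) :
    (KN t ψ φ hψ hC N f : T → ℂ) v =
      if t.len (φ v) ≤ N then ψ v * (f : T → ℂ) (φ v) else 0 := by
  simp only [KN, LinearMap.coe_mk, AddHom.coe_mk,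
    BoundedContinuousFunction.coe_ofNormedAddCommGroup]

set_option synthInstance.maxHeartbeats 1000000 in
/-- compactness of the truncated operator -/
lemma isCompact_KN (hψ : ∀ v, ‖ψ v‖ ≤ Cψ) (hC : 0 ≤ Cψ) (N : ℕ) :
    IsCompact (closure (⇑(KN t ψ φ hψ hC N) ''
      {f : LipSub t | lipNorm t (f : T → ℂ) ≤ 1})) := by
  classical
  set BN : Finset T := (levels_finite t N).toFinset with hBN
  set g : T → (T →ᵇ ℂ) := fun w => BoundedContinuousFunction.ofNormedAddCommGroup
    (fun v => if φ v = w then ψ v else 0) continuous_of_discreteTopology Cψ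
    (by
      intro v
      split
      · exact hψ v
      · simpa using hC) with hg
  set V : Submodule ℂ (T →ᵇ ℂ) := Submodule.span ℂ (g '' ↑BN) with hV
  haveI hfin : FiniteDimensional ℂ ↥V :=
    FiniteDimensional.span_of_finite ℂ (Set.Finite.image g (BN.finite_toSet))
  have hmem : ∀ f : LipSub t, KN t ψ φ hψ hC N f ∈ V := by
    intro f
    have hsum : KN t ψ φ hψ hC N f = ∑ w ∈ BN, (f : T → ℂ) w • g w := by
      ext v
      rw [KN_apply]
      have hcoe : ((∑ w ∈ BN, (f : T → ℂ) w • g w : T →ᵇ ℂ) : T → ℂ) v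
          = ∑ w ∈ BN, (f : T → ℂ) w • ((g w : T → ℂ) v) := by
        rw [BoundedContinuousFunction.coe_sum]
        simp [Finset.sum_apply]
      rw [hcoe]
      have hterm : ∀ w, (f : T → ℂ) w • ((g w : T → ℂ) v)
          = if w = φ v then (f : T → ℂ) w * ψ v else 0 := by
        intro w
        simp only [hg, BoundedContinuousFunction.coe_ofNormedAddCommGroup, smul_eq_mul]
        by_cases hw : φ v = w
        · rw [if_pos hw, if_pos hw.symm]
        · rw [if_neg hw, if_neg (fun h => hw h.symm), mul_zero]
      rw [Finset.sum_congr rfl (fun w _ => hterm w),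
        Finset.sum_ite_eq' BN (φ v) (fun w => (f : T → ℂ) w * ψ v)]
      have hmemiff : φ v ∈ BN ↔ t.len (φ v) ≤ N := by
        rw [hBN, Set.Finite.mem_toFinset]
        exact Iff.rfl
      by_cases h : t.len (φ v) ≤ N
      · rw [if_pos h, if_pos (hmemiff.mpr h), mul_comm]
      · rw [if_neg h, if_neg (fun hh => h (hmemiff.mp hh))]
    rw [hsum]
    exact Submodule.sum_mem V (fun w hw => Submodule.smul_mem V _
      (Submodule.subset_span (Set.mem_image_of_mem g (by exact_mod_cast hw))))
  set S := ⇑(KN t ψ φ hψ hC N) '' {f : LipSub t | lipNorm t (f : T → ℂ) ≤ 1} with hS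
  have hSV : S ⊆ ↑V := by rintro x ⟨f, -, rfl⟩; exact hmem f
  have hclosed : IsClosed (↑V : Set (T →ᵇ ℂ)) := Submodule.closed_of_finiteDimensional V
  have hclV : closure S ⊆ ↑V := closure_minimal hSV hclosed
  have hbdd : Bornology.IsBounded S := by
    rw [isBounded_iff_forall_norm_le]
    refine ⟨Cψ * (1 + N), ?_⟩
    rintro x ⟨f, hf, rfl⟩
    simp only [Set.mem_setOf_eq] at hf
    have hnn : (0:ℝ) ≤ Cψ * (1 + N) := by positivity
    apply (BoundedContinuousFunction.norm_le hnn).mpr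
    intro v
    have := KN_apply t ψ φ hψ hC N f v
    rw [show (KN t ψ φ hψ hC N f) v = (KN t ψ φ hψ hC N f : T → ℂ) v from rfl, this]
    split
    · rename_i h
      rw [norm_mul]
      have h1 : ‖(f : T → ℂ) (φ v)‖ ≤ 1 + N := by
        have h0 := norm_apply_le' t f (φ v)
        have h2 : dsup t f ≤ 1 := le_trans (dsup_le t f) hf
        have h3 : ‖(f : T → ℂ) t.o‖ ≤ 1 := le_trans (norm_o_le t f) hf
        have h4 : (t.len (φ v) : ℝ) ≤ N := by exact_mod_cast h
        nlinarith [dsup_nonneg t f, norm_nonneg ((f : T → ℂ) t.o)]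
      exact mul_le_mul (hψ v) h1 (norm_nonneg _) (le_trans (norm_nonneg _) (hψ v))
    · simpa using hnn
  haveI : ProperSpace ↥V := FiniteDimensional.proper ℂ ↥V
  set S' : Set ↥V := (Subtype.val) ⁻¹' (closure S) with hS'
  have hS'closed : IsClosed S' := (isClosed_closure).preimage continuous_subtype_val
  have hS'bdd : Bornology.IsBounded S' := by
    have hbddcl := hbdd.closure
    rw [isBounded_iff_forall_norm_le] at hbddcl ⊢
    obtain ⟨R, hR⟩ := hbddcl
    exact ⟨R, fun x hx => by rw [Submodule.coe_norm]; exact hR _ hx⟩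
  have hcomp : IsCompact S' := Metric.isCompact_of_isClosed_isBounded hS'closed hS'bdd
  have himg : Subtype.val '' S' = closure S := by
    rw [hS', Set.image_preimage_eq_inter_range]
    apply Set.inter_eq_left.mpr
    intro x hx
    exact ⟨⟨x, hclV hx⟩, rfl⟩
  rw [← himg]
  exact hcomp.image continuous_subtype_val

end Stmt13Aux

namespace Stmt13Aux

variable {T : Type*} [TopologicalSpace T] [DiscreteTopology T] (t : InfRootedTree T)

omit [TopologicalSpace T] [DiscreteTopology T] in
lemma lipNorm_zero : lipNorm t ((0 : LipSub t) : T → ℂ) = 0 := by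
  have : Nonempty T := nonempty_T t
  unfold lipNorm
  have h1 : (fun v => ‖Dop t ((0 : LipSub t) : T → ℂ) v‖) = fun _ => (0:ℝ) := by
    funext v
    have : ((0 : LipSub t) : T → ℂ) = (0 : T → ℂ) := rfl
    rw [this]
    simp only [Dop]
    split <;> simp
  rw [h1, ciSup_const]
  simp

/-- the inner set of norms for a given K, A -/
lemma zero_mem_inner (A K : LipSub t →ₗ[ℂ] (T →ᵇ ℂ)) :
    (0:ℝ) ∈ {y : ℝ | ∃ f : LipSub t, lipNorm t (f : T → ℂ) ≤ 1 ∧ y = ‖A f - K f‖} := by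
  refine ⟨0, by rw [lipNorm_zero]; norm_num, ?_⟩
  rw [map_zero, map_zero, sub_zero, norm_zero]

lemma inner_bddAbove (A K : LipSub t →ₗ[ℂ] (T →ᵇ ℂ)) {C : ℝ}
    (hC : ∀ f : LipSub t, ‖A f‖ ≤ C * lipNorm t (f : T → ℂ)) (hC0 : 0 ≤ C)
    (hK : IsCompact (closure (⇑K '' {f : LipSub t | lipNorm t (f : T → ℂ) ≤ 1}))) :
    BddAbove {y : ℝ | ∃ f : LipSub t, lipNorm t (f : T → ℂ) ≤ 1 ∧ y = ‖A f - K f‖} := by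
  have hb := hK.isBounded
  rw [isBounded_iff_forall_norm_le] at hb
  obtain ⟨R, hR⟩ := hb
  refine ⟨C + R, ?_⟩
  rintro y ⟨f, hf, rfl⟩
  have h1 : ‖A f‖ ≤ C := by
    calc ‖A f‖ ≤ C * lipNorm t (f : T → ℂ) := hC f
      _ ≤ C * 1 := by
          apply mul_le_mul_of_nonneg_left hf hC0
      _ = C := mul_one C
  have h2 : ‖K f‖ ≤ R := hR _ (subset_closure ⟨f, hf, rfl⟩)
  calc ‖A f - K f‖ ≤ ‖A f‖ + ‖K f‖ := norm_sub_le _ _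
    _ ≤ C + R := add_le_add h1 h2

end Stmt13Aux

set_option maxHeartbeats 1000000 in
set_option synthInstance.maxHeartbeats 1000000 in
open Stmt13Aux in
/-- if `ψC_φ : 𝓛 → L^∞` is bounded, its essential norm (the distance to the
compact operators, an operator being compact when the image of the unit ball of `𝓛` is
relatively compact and the operator norm being the supremum of the norms over the unit
ball) equals `limsup_{|φ(v)|→∞} |ψ(v)|·|φ(v)|`, i.e. the infimum over `N` of
`sup {|ψ(v)|·|φ(v)| : |φ(v)| > N}` (this being `0` if `φ` has finite range). -/
theorem stmt13 {T : Type*} [TopologicalSpace T] [DiscreteTopology T] (t : InfRootedTree T)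
    (ψ : T → ℂ) (φ : T → T)
    (A : LipSub t →ₗ[ℂ] (T →ᵇ ℂ))
    (hA : ∀ f : LipSub t, ∀ v : T, A f v = ψ v * (f : T → ℂ) (φ v))
    (hb : ∃ C : ℝ, ∀ f : LipSub t, ‖A f‖ ≤ C * lipNorm t (f : T → ℂ)) :
    sInf {x : ℝ | ∃ K : LipSub t →ₗ[ℂ] (T →ᵇ ℂ),
        IsCompact (closure (⇑K '' {f : LipSub t | lipNorm t (f : T → ℂ) ≤ 1})) ∧
        x = sSup {y : ℝ | ∃ f : LipSub t, lipNorm t (f : T → ℂ) ≤ 1 ∧ y = ‖A f - K f‖}} =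
      ⨅ N : ℕ, ⨆ v : {v : T // N < t.len (φ v)}, ‖ψ v.1‖ * t.len (φ v.1) := by
  classical
  have hneT : Nonempty T := ⟨t.o⟩
  obtain ⟨C, hC⟩ := hb
  -- basic bounds on ψ
  have hCpos : 0 ≤ C := by
    have h1 := hC (oneF t)
    rw [lipNorm_oneF, mul_one] at h1
    exact le_trans (norm_nonneg _) h1
  have hψ : ∀ v, ‖ψ v‖ ≤ C := by
    intro v
    have h1 := hC (oneF t)
    rw [lipNorm_oneF, mul_one] at h1
    have h2 := BoundedContinuousFunction.norm_coe_le_norm (A (oneF t)) v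
    rw [hA] at h2
    have h3 : ((oneF t : T → ℂ)) (φ v) = 1 := rfl
    rw [h3, mul_one] at h2
    exact le_trans h2 h1
  have hψlen : ∀ v, ‖ψ v‖ * t.len (φ v) ≤ C := by
    intro v
    have h1 := hC (lenF t)
    rw [lipNorm_lenF, mul_one] at h1
    have h2 := BoundedContinuousFunction.norm_coe_le_norm (A (lenF t)) v
    rw [hA] at h2
    have h3 : ((lenF t : T → ℂ)) (φ v) = (t.len (φ v) : ℂ) := rfl
    rw [h3, norm_mul, Complex.norm_natCast] at h2
    exact le_trans h2 h1
  -- notation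
  set ball : Set (LipSub t) := {f : LipSub t | lipNorm t (f : T → ℂ) ≤ 1} with hball
  set R : ℕ → ℝ := fun N => ⨆ v : {v : T // N < t.len (φ v)}, ‖ψ v.1‖ * t.len (φ v.1)
    with hR
  set LHSset : Set ℝ := {x : ℝ | ∃ K : LipSub t →ₗ[ℂ] (T →ᵇ ℂ),
      IsCompact (closure (⇑K '' ball)) ∧
      x = sSup {y : ℝ | ∃ f : LipSub t, lipNorm t (f : T → ℂ) ≤ 1 ∧ y = ‖A f - K f‖}}
    with hLHSset
  have hRBdd : ∀ N : ℕ, BddAbove (Set.range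
      fun v : {v : T // N < t.len (φ v)} => ‖ψ v.1‖ * t.len (φ v.1)) := by
    intro N
    exact ⟨C, by rintro x ⟨v, rfl⟩; exact hψlen v.1⟩
  have hRnonneg : ∀ N : ℕ, 0 ≤ R N := by
    intro N
    exact Real.iSup_nonneg (fun v => by positivity)
  have hRBddBelow : BddBelow (Set.range R) :=
    ⟨0, by rintro y ⟨N, rfl⟩; exact hRnonneg N⟩
  have hLHSBddBelow : BddBelow LHSset := by
    refine ⟨0, ?_⟩
    rintro x ⟨K, hKc, rfl⟩
    exact le_csSup (inner_bddAbove t A K hC hCpos hKc) (zero_mem_inner t A K)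
  apply le_antisymm
  · -- upper estimate: sInf ≤ ⨅ R N
    apply le_ciInf
    intro N
    set K := KN t ψ φ hψ hCpos N with hK
    have hKc := isCompact_KN t ψ φ hψ hCpos N
    have hmem : sSup {y : ℝ | ∃ f : LipSub t, lipNorm t (f : T → ℂ) ≤ 1 ∧ y = ‖A f - K f‖}
        ∈ LHSset := ⟨K, hKc, rfl⟩
    refine le_trans (csInf_le hLHSBddBelow hmem) ?_
    apply csSup_le ⟨0, zero_mem_inner t A K⟩
    rintro y ⟨f, hf, rfl⟩
    apply (BoundedContinuousFunction.norm_le (hRnonneg N)).mpr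
    intro v
    have happ : (A f - K f) v = A f v - K f v := rfl
    rw [happ, hA, KN_apply]
    by_cases h : t.len (φ v) ≤ N
    · rw [if_pos h, sub_self, norm_zero]
      exact hRnonneg N
    · rw [if_neg h, sub_zero, norm_mul]
      push_neg at h
      have hlen1 : 1 ≤ t.len (φ v) := by omega
      have h1 : ‖(f : T → ℂ) (φ v)‖ ≤ (t.len (φ v) : ℝ) := by
        have h0 := norm_apply_le' t f (φ v)
        have h23 : ‖(f : T → ℂ) t.o‖ + dsup t f ≤ 1 := by
          rw [lipNorm_eq] at hf; exact hf
        have h4 : (1:ℝ) ≤ (t.len (φ v) : ℝ) := by exact_mod_cast hlen1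
        nlinarith [dsup_nonneg t f, norm_nonneg ((f : T → ℂ) t.o),
          mul_nonneg (sub_nonneg.mpr h4) (norm_nonneg ((f : T → ℂ) t.o)),
          mul_le_mul_of_nonneg_left h23 (le_trans zero_le_one h4)]
      have h5 : ‖ψ v‖ * ‖(f : T → ℂ) (φ v)‖ ≤ ‖ψ v‖ * (t.len (φ v) : ℝ) :=
        mul_le_mul_of_nonneg_left h1 (norm_nonneg _)
      refine le_trans h5 ?_
      exact le_ciSup (hRBdd N) (⟨v, h⟩ : {v : T // N < t.len (φ v)})
  · -- lower estimate
    apply le_csInf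
    · exact ⟨_, ⟨KN t ψ φ hψ hCpos 0, isCompact_KN t ψ φ hψ hCpos 0, rfl⟩⟩
    · rintro x ⟨K, hKc, rfl⟩
      set Sset := {y : ℝ | ∃ f : LipSub t, lipNorm t (f : T → ℂ) ≤ 1 ∧ y = ‖A f - K f‖}
        with hSset
      have hSbdd : BddAbove Sset := inner_bddAbove t A K hC hCpos hKc
      have hX0 : (0:ℝ) ≤ sSup Sset := le_csSup hSbdd (zero_mem_inner t A K)
      set s := ⨅ N : ℕ, R N with hs
      rcases le_or_gt s 0 with hsle | hspos
      · exact le_trans hsle hX0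
      · apply le_of_forall_pos_le_add
        intro ε hε
        set ε3 := ε / 3 with hε3
        have hε3pos : 0 < ε3 := by positivity
        -- choose points far out
        have hpt : ∀ N : ℕ, ∃ v : T, N < t.len (φ v) ∧ s - ε3 < ‖ψ v‖ * t.len (φ v) := by
          intro N
          have hsR : s ≤ R N := ciInf_le hRBddBelow N
          have hnonempty : Nonempty {v : T // N < t.len (φ v)} := by
            by_contra hemp
            rw [not_nonempty_iff] at hemp
            have : R N = 0 := Real.iSup_of_isEmpty _
            rw [this] at hsR
            linarith
          have hlt : s - ε3 < R N := by linarith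
          obtain ⟨y, hy, hy2⟩ := exists_lt_of_lt_csSup
            (Set.range_nonempty (fun v : {v : T // N < t.len (φ v)} =>
              ‖ψ v.1‖ * t.len (φ v.1))) hlt
          obtain ⟨v, rfl⟩ := hy
          exact ⟨v.1, v.2, hy2⟩
        choose vv hv1 hv2 using hpt
        -- the test functions
        set f : ℕ → LipSub t := fun n => F t (φ (vv n)) with hf
        have hfball : ∀ n, f n ∈ ball := by
          intro n
          simp only [hball, Set.mem_setOf_eq, hf]
          exact lipNorm_F_le t _
        have hKmem : ∀ n, K (f n) ∈ closure (⇑K '' ball) :=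
          fun n => subset_closure ⟨f n, hfball n, rfl⟩
        obtain ⟨a, -, σ, hσ, hconv⟩ := hKc.tendsto_subseq hKmem
        rw [Metric.tendsto_atTop] at hconv
        obtain ⟨k₀, hk₀⟩ := hconv (ε3/2) (by positivity)
        set M := C + 1 with hM
        have hMpos : 0 < M := by linarith
        set j := σ k₀ with hj
        set Lj := t.len (φ (vv j)) with hLj
        set k₁ := max k₀ ⌈(M * Lj) / ε3⌉₊ with hk₁
        set l := σ k₁ with hl
        set Ll := t.len (φ (vv l)) with hLl
        have hLlgt : (M * Lj) / ε3 < (Ll : ℝ) := by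
          have h1 : (M * Lj) / ε3 ≤ (⌈(M * Lj) / ε3⌉₊ : ℝ) := Nat.le_ceil _
          have h2 : (⌈(M * Lj) / ε3⌉₊ : ℕ) ≤ k₁ := le_max_right _ _
          have h3 : k₁ ≤ σ k₁ := hσ.le_apply
          have h4 : σ k₁ < Ll := hv1 l
          have : (⌈(M * Lj) / ε3⌉₊ : ℝ) < (Ll : ℝ) := by exact_mod_cast by omega
          linarith
        have hLlpos : 0 < Ll := by
          have : σ k₁ < Ll := hv1 l
          omega
        have hLlRpos : (0:ℝ) < (Ll : ℝ) := by exact_mod_cast hLlpos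
        -- the difference test function
        set h : LipSub t := f l - f j with hh
        have hhball : lipNorm t ((h : T → ℂ)) ≤ 1 := lipNorm_F_sub_le t _ _
        have hKh : ‖K h‖ ≤ ε3 := by
          rw [hh, map_sub]
          have h1 : dist (K (f l)) a < ε3/2 := hk₀ k₁ (le_max_left _ _)
          have h2 : dist (K (f j)) a < ε3/2 := hk₀ k₀ le_rfl
          calc ‖K (f l) - K (f j)‖ ≤ dist (K (f l)) a + dist (K (f j)) a := by
                rw [dist_eq_norm, dist_eq_norm]
                have := norm_sub_le (K (f l) - a) (-(K (f j) - a))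
                simp only [norm_neg, sub_sub_sub_cancel_right] at this
                calc ‖K (f l) - K (f j)‖ = ‖(K (f l) - a) - (K (f j) - a)‖ := by ring_nf
                  _ ≤ ‖K (f l) - a‖ + ‖K (f j) - a‖ := norm_sub_le _ _
            _ ≤ ε3 := by linarith
        -- value of h at w_l
        have hval : (s - ε3) - ε3 ≤ ‖(A h) (vv l)‖ := by
          rw [hA]
          set wl := φ (vv l) with hwl
          set wj := φ (vv j) with hwj
          have hcoe : ((h : T → ℂ)) wl = testFun t wl wl - testFun t wj wl := rfl
          set c := ((anc t wl ∩ anc t wj).card) with hc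
          have hc1 : 1 ≤ c := card_inter_pos t wl wj
          have hcLj : c ≤ Lj + 1 := card_inter_le_right t wl wj
          have hcLl : c ≤ Ll + 1 := card_inter_le_left t wl wj
          have hval2 : ((h : T → ℂ)) wl = ((Ll + 1 - c : ℕ) : ℂ) := by
            rw [hcoe, testFun_self]
            unfold testFun
            rw [← hc]
            have : ((Ll + 1 - c : ℕ) : ℂ) = (Ll : ℂ) + 1 - (c : ℂ) := by
              push_cast [Nat.cast_sub hcLl]
              ring
            rw [this]
            push_cast
            ring
          have hnorm : ‖((h : T → ℂ)) wl‖ = ((Ll + 1 - c : ℕ) : ℝ) := by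
            rw [hval2, Complex.norm_natCast]
          have hge : (Ll : ℝ) - (Lj : ℝ) ≤ ((Ll + 1 - c : ℕ) : ℝ) := by
            have : ((Ll + 1 - c : ℕ) : ℝ) = (Ll : ℝ) + 1 - (c : ℝ) := by
              push_cast [Nat.cast_sub hcLl]
              ring
            rw [this]
            have : (c : ℝ) ≤ (Lj : ℝ) + 1 := by exact_mod_cast hcLj
            linarith
          rw [norm_mul, hnorm]
          have hψLl : s - ε3 < ‖ψ (vv l)‖ * (Ll : ℝ) := hv2 l
          have hψLj : ‖ψ (vv l)‖ * (Lj : ℝ) ≤ ε3 := by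
            have h1 : ‖ψ (vv l)‖ * (Ll : ℝ) ≤ M := by
              have := hψlen (vv l)
              rw [← hLl] at this  -- may not be needed
              linarith
            have h2 : M * (Lj : ℝ) < ε3 * (Ll : ℝ) := by
              rw [div_lt_iff₀ hε3pos] at hLlgt
              linarith [hLlgt]
            nlinarith [norm_nonneg (ψ (vv l)), Nat.cast_nonneg (α := ℝ) Lj]
          have hmul : ‖ψ (vv l)‖ * ((Ll : ℝ) - (Lj : ℝ)) ≤ ‖ψ (vv l)‖ * ((Ll + 1 - c : ℕ) : ℝ) :=
            mul_le_mul_of_nonneg_left hge (norm_nonneg _)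
          have hexpand : ‖ψ (vv l)‖ * ((Ll : ℝ) - (Lj : ℝ))
              = ‖ψ (vv l)‖ * (Ll : ℝ) - ‖ψ (vv l)‖ * (Lj : ℝ) := by ring
          linarith
        -- conclude
        have hAh : (s - ε3) - ε3 ≤ ‖A h‖ :=
          le_trans hval (BoundedContinuousFunction.norm_coe_le_norm _ _)
        have hfin : s - 3*ε3 ≤ ‖A h - K h‖ := by
          have := norm_sub_norm_le (A h) (K h)
          linarith
        have hmem : ‖A h - K h‖ ∈ Sset := ⟨h, hhball, rfl⟩
        have := le_csSup hSbdd hmem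
        have hε3 : 3 * ε3 = ε := by rw [hε3]; ring
        linarith
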